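/- Let A and B be finite sets with #A ≥ 1 and #B ≥ 2, let F = F(A ⊔ B) be the free group with free basis A ⊔ B, and let b ∈ ⟨B⟩. If an element w ∈ F lies in the subgroup ⟨A ∪ {b}⟩ generated by the basis elements from A together with b, then the stabilizer Stab(w) of w in Aut(F) is not a cyclic group. -/

import Mathlib

open Subgroup

/-- exponent-sum at one letter -/
noncomputable def expS {α : Type*} (s : α) : FreeGroup α →* Multiplicative ℤ := by
  classical exact FreeGroup.lift (fun x => Multiplicative.ofAdd (if x = s then (1:ℤ) else 0))

lemma expS_of {α : Type*} (s : α) : expS s (FreeGroup.of s) = Multiplicative.ofAdd 1 := by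
  classical simp [expS]

lemma expS_of_ne {α : Type*} {s t : α} (h : t ≠ s) : expS s (FreeGroup.of t) = 1 := by
  classical simp [expS, h]

/-- a commutative free group is generated by one element, torsion-free unless trivial -/
lemma freeGroup_comm_cyclic {G : Type*} [Group G] [IsFreeGroup G]
    (hcomm : ∀ x y : G, x * y = y * x) :
    Subsingleton G ∨ ∃ z : G, (∀ x : G, x ∈ Subgroup.zpowers z) ∧ (∀ n : ℤ, z ^ n = 1 → n = 0) := by
  classical
  set X := IsFreeGroup.Generators G
  let e : FreeGroup X ≃* G := IsFreeGroup.mulEquiv G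
  have hXsub : ∀ x y : X, x = y := by
    by_contra hne
    push_neg at hne
    obtain ⟨x1, x2, h12⟩ := hne
    let f : X → Equiv.Perm (Fin 3) := fun x =>
      if x = x1 then Equiv.swap 0 1 else if x = x2 then Equiv.swap 0 2 else 1
    have hc := hcomm (e (FreeGroup.of x1)) (e (FreeGroup.of x2))
    rw [← _root_.map_mul, ← _root_.map_mul] at hc
    have hc2 : FreeGroup.of x1 * FreeGroup.of x2 = FreeGroup.of x2 * FreeGroup.of x1 :=
      e.injective hc
    have hc3 := congrArg (FreeGroup.lift f) hc2
    rw [_root_.map_mul, _root_.map_mul, FreeGroup.lift_apply_of, FreeGroup.lift_apply_of] at hc3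
    simp only [f, if_pos rfl, if_neg h12, if_neg (Ne.symm h12)] at hc3
    exact absurd hc3 (by decide)
  have htop : Subgroup.closure (Set.range (FreeGroup.of : X → FreeGroup X)) = ⊤ :=
    FreeGroup.closure_range_of X
  rcases isEmpty_or_nonempty X with hX | hX
  · left
    have key : ∀ g : FreeGroup X, g = 1 := by
      intro g
      have hg : g ∈ Subgroup.closure (Set.range (FreeGroup.of : X → FreeGroup X)) := by
        rw [htop]; trivial
      have hre : Set.range (FreeGroup.of : X → FreeGroup X) = ∅ := by
        simp [Set.range_eq_empty]
      rw [hre, Subgroup.closure_empty, Subgroup.mem_bot] at hg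
      exact hg
    constructor
    intro a c
    have h1 := key (e.symm a)
    have h2 := key (e.symm c)
    have h3 := congrArg e (h1.trans h2.symm)
    simpa using h3
  · right
    obtain ⟨ξ⟩ := hX
    refine ⟨e (FreeGroup.of ξ), ?_, ?_⟩
    · intro x
      have hx : e.symm x ∈ Subgroup.closure (Set.range (FreeGroup.of : X → FreeGroup X)) := by
        rw [htop]; trivial
      have hr : Set.range (FreeGroup.of : X → FreeGroup X) = {FreeGroup.of ξ} := by
        apply Set.eq_singleton_iff_unique_mem.2
        exact ⟨⟨ξ, rfl⟩, by rintro _ ⟨x, rfl⟩; rw [hXsub x ξ]⟩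
      rw [hr, ← Subgroup.zpowers_eq_closure, Subgroup.mem_zpowers_iff] at hx
      obtain ⟨k, hk⟩ := hx
      refine Subgroup.mem_zpowers_iff.2 ⟨k, ?_⟩
      have := congrArg e hk
      rw [map_zpow] at this
      simpa using this
    · intro n hn
      have h1 : (FreeGroup.of ξ : FreeGroup X) ^ n = 1 := by
        apply e.injective
        rw [map_zpow]; simpa using hn
      have h2 := congrArg (expS ξ) h1
      rw [map_zpow, expS_of, MonoidHom.map_one] at h2
      have h3 := congrArg Multiplicative.toAdd h2
      simpa using h3
/-- centralizer of a generator: anything commuting with `of s` is a power of it -/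
lemma comm_mem_zpowers {α : Type*} (x : FreeGroup α) (s : α)
    (h : x * FreeGroup.of s = FreeGroup.of s * x) :
    x ∈ Subgroup.zpowers (FreeGroup.of s) := by
  classical
  set t : FreeGroup α := FreeGroup.of s with ht
  set K : Subgroup (FreeGroup α) := Subgroup.closure {x, t} with hK
  have hxK : x ∈ K := Subgroup.subset_closure (by simp)
  have htK : t ∈ K := Subgroup.subset_closure (by simp)
  -- K is commutative
  have hgenc : ∀ u ∈ ({x, t} : Set (FreeGroup α)), ∀ v ∈ ({x, t} : Set (FreeGroup α)),
      Commute u v := by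
    rintro u (rfl | rfl) v (rfl | rfl)
    · exact Commute.refl _
    · exact h
    · exact h.symm
    · exact Commute.refl _
  have hcommK : ∀ p q : K, p * q = q * p := by
    rintro ⟨p, hp⟩ ⟨q, hq⟩
    have : Commute p q := by
      induction hp, hq using Subgroup.closure_induction₂ with
      | mem u v hu hv => exact hgenc u hu v hv
      | one_left v hv => exact Commute.one_left v
      | one_right u hu => exact Commute.one_right u
      | mul_left u v z hu hv hz h1 h2 => exact h1.mul_left h2
      | mul_right u v z hu hv hz h1 h2 => exact h1.mul_right h2
      | inv_left u v hu hv h1 => exact h1.inv_left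
      | inv_right u v hu hv h1 => exact h1.inv_right
    exact Subtype.ext (by simpa using this.eq)
  rcases freeGroup_comm_cyclic hcommK with hsub | ⟨z, hzgen, hztf⟩
  · have : (⟨x, hxK⟩ : K) = ⟨1, K.one_mem⟩ := Subsingleton.elim _ _
    have hx1 : x = 1 := congrArg Subtype.val this
    rw [hx1]; exact Subgroup.one_mem _
  · obtain ⟨p, hp⟩ := Subgroup.mem_zpowers_iff.1 (hzgen ⟨x, hxK⟩)
    obtain ⟨q, hq⟩ := Subgroup.mem_zpowers_iff.1 (hzgen ⟨t, htK⟩)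
    have hpv : (z : FreeGroup α) ^ p = x := by
      have := congrArg Subtype.val hp; simpa using this
    have hqv : (z : FreeGroup α) ^ q = t := by
      have := congrArg Subtype.val hq; simpa using this
    have hchi : (expS s ((z : FreeGroup α))) ^ q = Multiplicative.ofAdd 1 := by
      rw [← map_zpow, hqv, ht, expS_of]
    have hchi2 : q * Multiplicative.toAdd (expS s ((z : FreeGroup α))) = 1 := by
      have := congrArg Multiplicative.toAdd hchi
      simpa [mul_comm] using this
    rcases Int.eq_one_or_neg_one_of_mul_eq_one' hchi2 with ⟨hq1, -⟩ | ⟨hq1, -⟩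
    · subst hq1
      rw [zpow_one] at hqv
      rw [← hpv, hqv]
      exact Subgroup.zpow_mem _ (Subgroup.mem_zpowers _) _
    · subst hq1
      have : (z : FreeGroup α) = t⁻¹ := by
        rw [← hqv]; simp
      rw [← hpv, this]
      exact Subgroup.zpow_mem _ (Subgroup.inv_mem _ (Subgroup.mem_zpowers _)) _

/-- commuting with two distinct generators forces triviality -/
lemma comm_two_eq_one {α : Type*} (x : FreeGroup α) {s₁ s₂ : α} (hne : s₁ ≠ s₂)
    (h1 : x * FreeGroup.of s₁ = FreeGroup.of s₁ * x)
    (h2 : x * FreeGroup.of s₂ = FreeGroup.of s₂ * x) : x = 1 := by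
  obtain ⟨p, hp⟩ := Subgroup.mem_zpowers_iff.1 (comm_mem_zpowers x s₁ h1)
  obtain ⟨q, hq⟩ := Subgroup.mem_zpowers_iff.1 (comm_mem_zpowers x s₂ h2)
  have e1 : expS s₁ x = Multiplicative.ofAdd p := by
    rw [← hp, map_zpow, expS_of]
    apply Multiplicative.toAdd.injective
    simp
  have e2 : expS s₁ x = 1 := by
    rw [← hq, map_zpow, expS_of_ne (Ne.symm hne)]
    simp
  rw [e2] at e1
  have : p = 0 := by
    have := congrArg Multiplicative.toAdd e1
    simpa using this.symm
  rw [← hp, this, zpow_zero]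

/-- torsion-freeness -/
lemma freeGroup_tf {α : Type*} {x : FreeGroup α} (hx : x ≠ 1) {n : ℤ} (h : x ^ n = 1) :
    n = 0 := by
  set K : Subgroup (FreeGroup α) := Subgroup.zpowers x with hK
  have hxK : x ∈ K := Subgroup.mem_zpowers x
  have hcommK : ∀ p q : K, p * q = q * p := by
    rintro ⟨p, hp⟩ ⟨q, hq⟩
    obtain ⟨i, hi⟩ := Subgroup.mem_zpowers_iff.1 hp
    obtain ⟨j, hj⟩ := Subgroup.mem_zpowers_iff.1 hq
    apply Subtype.ext
    simp only [Subgroup.coe_mul]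
    rw [← hi, ← hj, ← zpow_add, ← zpow_add, add_comm]
  rcases freeGroup_comm_cyclic hcommK with hsub | ⟨z, hzgen, hztf⟩
  · exfalso
    have : (⟨x, hxK⟩ : K) = ⟨1, K.one_mem⟩ := Subsingleton.elim _ _
    exact hx (congrArg Subtype.val this)
  · obtain ⟨p, hp⟩ := Subgroup.mem_zpowers_iff.1 (hzgen ⟨x, hxK⟩)
    have hxn : (⟨x, hxK⟩ : K) ^ n = 1 := by
      apply Subtype.ext; simpa using h
    rw [← hp, ← zpow_mul] at hxn
    have := hztf _ hxn
    rcases mul_eq_zero.1 this with hp0 | hn0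
    · exfalso
      apply hx
      rw [hp0, zpow_zero] at hp
      simpa using congrArg Subtype.val hp.symm
    · exact hn0
section Constructions

variable {A B : Type}

/-- partial conjugation of the B-part by g -/
def pConj (g : FreeGroup (A ⊕ B)) : FreeGroup (A ⊕ B) →* FreeGroup (A ⊕ B) :=
  FreeGroup.lift (fun s => Sum.rec (fun a => FreeGroup.of (Sum.inl a))
    (fun y => g * FreeGroup.of (Sum.inr y) * g⁻¹) s)

@[simp] lemma pConj_inl (g : FreeGroup (A ⊕ B)) (a : A) :
    pConj g (FreeGroup.of (Sum.inl a)) = FreeGroup.of (Sum.inl a) := by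
  simp [pConj]

@[simp] lemma pConj_inr (g : FreeGroup (A ⊕ B)) (y : B) :
    pConj g (FreeGroup.of (Sum.inr y)) = g * FreeGroup.of (Sum.inr y) * g⁻¹ := by
  simp [pConj]

/-- SB -/
local notation "SB" => Subgroup.closure (Set.range fun y : B => FreeGroup.of (Sum.inr y) :
  Set (FreeGroup (A ⊕ B)))

lemma conj_on_SB (f : FreeGroup (A ⊕ B) →* FreeGroup (A ⊕ B)) (c : FreeGroup (A ⊕ B))
    (hf : ∀ y : B, f (FreeGroup.of (Sum.inr y)) = c * FreeGroup.of (Sum.inr y) * c⁻¹) :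
    ∀ x ∈ SB, f x = c * x * c⁻¹ := by
  intro x hx
  induction hx using Subgroup.closure_induction with
  | mem u hu => obtain ⟨y, rfl⟩ := hu; exact hf y
  | one => simp
  | mul u v hu hv h1 h2 => rw [map_mul, h1, h2]; group
  | inv u hu h1 => rw [map_inv, h1]; group

lemma pConj_comp (g h : FreeGroup (A ⊕ B)) (hg : g ∈ SB) (hh : h ∈ SB)
    (x : FreeGroup (A ⊕ B)) : pConj g (pConj h x) = pConj (g * h) x := by
  have hcomp : (pConj g).comp (pConj h) = pConj (g * h) := by
    apply FreeGroup.ext_hom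
    rintro (a | y)
    · simp
    · simp only [MonoidHom.coe_comp, Function.comp_apply, pConj_inr]
      rw [map_mul, map_mul, map_inv, pConj_inr]
      rw [conj_on_SB (pConj g) g (fun y => pConj_inr g y) h hh]
      group
  exact DFunLike.congr_fun hcomp x

/-- the partial-conjugation automorphism -/
def thAut (b : FreeGroup (A ⊕ B)) (hb : b ∈ SB) : MulAut (FreeGroup (A ⊕ B)) where
  toFun := pConj b
  invFun := pConj b⁻¹
  left_inv := by
    intro x
    rw [pConj_comp b⁻¹ b (Subgroup.inv_mem _ hb) hb, inv_mul_cancel]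
    have h : pConj (1 : FreeGroup (A ⊕ B)) = MonoidHom.id _ :=
      FreeGroup.ext_hom _ _ (by rintro (a | y) <;> simp)
    rw [h]; rfl
  right_inv := by
    intro x
    rw [pConj_comp b b⁻¹ hb (Subgroup.inv_mem _ hb), mul_inv_cancel]
    have h : pConj (1 : FreeGroup (A ⊕ B)) = MonoidHom.id _ :=
      FreeGroup.ext_hom _ _ (by rintro (a | y) <;> simp)
    rw [h]; rfl
  map_mul' := map_mul _

lemma thAut_zpow_spec (b : FreeGroup (A ⊕ B)) (hb : b ∈ SB) (n : ℤ) :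
    (∀ a : A, (thAut b hb ^ n : MulAut (FreeGroup (A ⊕ B))) (FreeGroup.of (Sum.inl a))
        = FreeGroup.of (Sum.inl a)) ∧
    (∀ x ∈ SB, (thAut b hb ^ n : MulAut (FreeGroup (A ⊕ B))) x = b ^ n * x * b ^ (-n)) := by
  induction n using Int.induction_on with
  | zero => simp
  | succ i ih =>
    obtain ⟨ih1, ih2⟩ := ih
    have hstep : ∀ x, (thAut b hb ^ ((i : ℤ) + 1) : MulAut (FreeGroup (A ⊕ B))) x
        = (thAut b hb ^ (i : ℤ) : MulAut (FreeGroup (A ⊕ B))) (thAut b hb x) := by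
      intro x
      rw [zpow_add_one]
      rfl
    constructor
    · intro a
      rw [hstep]
      have : thAut b hb (FreeGroup.of (Sum.inl a)) = FreeGroup.of (Sum.inl a) := pConj_inl b a
      rw [this]; exact ih1 a
    · intro x hx
      rw [hstep]
      have h1 : thAut b hb x = b * x * b⁻¹ :=
        conj_on_SB (pConj b) b (fun y => pConj_inr b y) x hx
      have hmem : b * x * b⁻¹ ∈ SB := by
        exact Subgroup.mul_mem _ (Subgroup.mul_mem _ hb hx) (Subgroup.inv_mem _ hb)
      rw [h1, ih2 _ hmem]
      group
  | pred i ih =>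
    obtain ⟨ih1, ih2⟩ := ih
    have hstep : ∀ x, (thAut b hb ^ (-(i : ℤ) - 1) : MulAut (FreeGroup (A ⊕ B))) x
        = (thAut b hb ^ (-(i : ℤ)) : MulAut (FreeGroup (A ⊕ B))) ((thAut b hb)⁻¹ x) := by
      intro x
      rw [zpow_sub_one]
      rfl
    constructor
    · intro a
      rw [hstep]
      have : (thAut b hb)⁻¹ (FreeGroup.of (Sum.inl a)) = FreeGroup.of (Sum.inl a) :=
        pConj_inl b⁻¹ a
      rw [this]; exact ih1 a
    · intro x hx
      rw [hstep]
      have h1 : (thAut b hb)⁻¹ x = b⁻¹ * x * b⁻¹⁻¹ :=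
        conj_on_SB (pConj b⁻¹) b⁻¹ (fun y => pConj_inr b⁻¹ y) x hx
      have hmem : b⁻¹ * x * b⁻¹⁻¹ ∈ SB :=
        Subgroup.mul_mem _ (Subgroup.mul_mem _ (Subgroup.inv_mem _ hb) hx)
          (Subgroup.inv_mem _ (Subgroup.inv_mem _ hb))
      rw [h1, ih2 _ hmem]
      group

/-- retraction killing the A part -/
def rhoB : FreeGroup (A ⊕ B) →* FreeGroup (A ⊕ B) :=
  FreeGroup.lift (fun s => Sum.rec (fun _ => 1) (fun y => FreeGroup.of (Sum.inr y)) s)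

@[simp] lemma rhoB_inl (a : A) : rhoB (FreeGroup.of (Sum.inl a)) = (1 : FreeGroup (A ⊕ B)) := by
  simp [rhoB]

@[simp] lemma rhoB_inr (y : B) :
    rhoB (FreeGroup.of (Sum.inr y)) = (FreeGroup.of (Sum.inr y) : FreeGroup (A ⊕ B)) := by
  simp [rhoB]

lemma rhoB_fix {x : FreeGroup (A ⊕ B)} (hx : x ∈ SB) : rhoB x = x := by
  induction hx using Subgroup.closure_induction with
  | mem u hu => obtain ⟨y, rfl⟩ := hu; simp
  | one => simp
  | mul u v hu hv h1 h2 => rw [map_mul, h1, h2]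
  | inv u hu h1 => rw [map_inv, h1]

end Constructions
section InvAut

variable {A B : Type} [DecidableEq B]

/-- homomorphism inverting one B generator -/
def invHom (y1 : B) : FreeGroup (A ⊕ B) →* FreeGroup (A ⊕ B) :=
  FreeGroup.lift (fun s => Sum.rec (fun a => FreeGroup.of (Sum.inl a))
    (fun y => if y = y1 then (FreeGroup.of (Sum.inr y : A ⊕ B))⁻¹ else FreeGroup.of (Sum.inr y)) s)

@[simp] lemma invHom_inl (y1 : B) (a : A) :
    invHom y1 (FreeGroup.of (Sum.inl a)) = (FreeGroup.of (Sum.inl a) : FreeGroup (A ⊕ B)) := by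
  simp [invHom]

lemma invHom_inr (y1 y : B) :
    invHom y1 (FreeGroup.of (Sum.inr y)) =
      if y = y1 then (FreeGroup.of (Sum.inr y : A ⊕ B))⁻¹ else FreeGroup.of (Sum.inr y) := by
  simp [invHom]

lemma invHom_invo (y1 : B) (x : FreeGroup (A ⊕ B)) : invHom y1 (invHom y1 x) = x := by
  have h : (invHom (A := A) y1).comp (invHom y1) = MonoidHom.id _ := by
    apply FreeGroup.ext_hom
    rintro (a | y)
    · simp
    · by_cases hy : y = y1
      · simp [invHom_inr, hy]
      · simp [invHom_inr, hy]
  exact DFunLike.congr_fun h x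

/-- the automorphism inverting one B generator -/
def invAut (y1 : B) : MulAut (FreeGroup (A ⊕ B)) where
  toFun := invHom y1
  invFun := invHom y1
  left_inv := invHom_invo y1
  right_inv := invHom_invo y1
  map_mul' := map_mul _

@[simp] lemma invAut_apply (y1 : B) (x : FreeGroup (A ⊕ B)) :
    invAut (A := A) y1 x = invHom y1 x := rfl

end InvAut
lemma conj_conj_comm {G : Type*} [Group G] {u v Y : G} (h : u * Y * u⁻¹ = v * Y * v⁻¹) :
    v⁻¹ * u * Y = Y * (v⁻¹ * u) := by
  have h2 : v⁻¹ * (u * Y * u⁻¹) * u = v⁻¹ * (v * Y * v⁻¹) * u := by rw [h]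
  simpa [mul_assoc] using h2

/-- Let A and B be finite sets with #A ≥ 1 and #B ≥ 2, let F = F(A ⊔ B) be
the free group with free basis A ⊔ B, and let b ∈ ⟨B⟩. If an element w ∈ F lies in the
subgroup ⟨A ∪ {b}⟩, then the stabilizer of w in Aut(F) is not a cyclic group. -/
theorem statement1 {A B : Type} [Finite A] [Finite B]
    (hA : 1 ≤ Nat.card A) (hB : 2 ≤ Nat.card B)
    (b : FreeGroup (A ⊕ B))
    (hb : b ∈ Subgroup.closure (Set.range fun y : B => FreeGroup.of (Sum.inr y)))
    (w : FreeGroup (A ⊕ B))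
    (hw : w ∈ Subgroup.closure
      ((Set.range fun a : A => FreeGroup.of (Sum.inl a)) ∪ {b})) :
    ¬ IsCyclic (MulAction.stabilizer (MulAut (FreeGroup (A ⊕ B))) w) := by
  classical
  intro hcyc
  obtain ⟨g, hg⟩ := hcyc.exists_generator
  have hBnt : Nontrivial B := Finite.one_lt_card_iff_nontrivial.mp hB
  obtain ⟨y1, y2, hy12⟩ := exists_pair_ne B
  have hAne : Nonempty A := by
    rcases isEmpty_or_nonempty A with hA0 | hA0
    · rw [Nat.card_of_isEmpty] at hA; omega
    · exact hA0
  obtain ⟨a0⟩ := hAne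
  by_cases hwA : w ∈ Subgroup.closure (Set.range fun a : A => FreeGroup.of (Sum.inl a))
  · -- CASE 1 : w lies in ⟨A⟩; swap and inversion automorphisms on B don't commute
    set σ : MulAut (FreeGroup (A ⊕ B)) :=
      FreeGroup.freeGroupCongr (Equiv.sumCongr (Equiv.refl A) (Equiv.swap y1 y2)) with hσdef
    set τ : MulAut (FreeGroup (A ⊕ B)) := invAut y1 with hτdef
    have hσfix : ∀ x ∈ Subgroup.closure (Set.range fun a : A => FreeGroup.of (Sum.inl a)),
        σ x = x := by
      intro x hx
      induction hx using Subgroup.closure_induction with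
      | mem u hu =>
        obtain ⟨a, rfl⟩ := hu
        simp [hσdef, Equiv.swap_apply_of_ne_of_ne]
      | one => exact _root_.map_one σ
      | mul u v hu hv h1 h2 => rw [_root_.map_mul, h1, h2]
      | inv u hu h1 => rw [_root_.map_inv, h1]
    have hτfix : ∀ x ∈ Subgroup.closure (Set.range fun a : A => FreeGroup.of (Sum.inl a)),
        τ x = x := by
      intro x hx
      induction hx using Subgroup.closure_induction with
      | mem u hu =>
        obtain ⟨a, rfl⟩ := hu
        rw [hτdef, invAut_apply, invHom_inl]
      | one => exact _root_.map_one τ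
      | mul u v hu hv h1 h2 => rw [_root_.map_mul, h1, h2]
      | inv u hu h1 => rw [_root_.map_inv, h1]
    have hσw : σ w = w := hσfix w hwA
    have hτw : τ w = w := hτfix w hwA
    have hσmem : σ ∈ MulAction.stabilizer (MulAut (FreeGroup (A ⊕ B))) w := by
      rw [MulAction.mem_stabilizer_iff, MulAut.smul_def]; exact hσw
    have hτmem : τ ∈ MulAction.stabilizer (MulAut (FreeGroup (A ⊕ B))) w := by
      rw [MulAction.mem_stabilizer_iff, MulAut.smul_def]; exact hτw
    set X : MulAction.stabilizer (MulAut (FreeGroup (A ⊕ B))) w := ⟨σ, hσmem⟩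
    set Y : MulAction.stabilizer (MulAut (FreeGroup (A ⊕ B))) w := ⟨τ, hτmem⟩
    obtain ⟨k, hk⟩ := Subgroup.mem_zpowers_iff.1 (hg X)
    obtain ⟨l, hl⟩ := Subgroup.mem_zpowers_iff.1 (hg Y)
    have hXY : X * Y = Y * X := by rw [← hk, ← hl, zpow_mul_comm]
    have hXYv : σ * τ = τ * σ := congrArg Subtype.val hXY
    have heval := congrArg (fun (e : MulAut (FreeGroup (A ⊕ B))) =>
      e (FreeGroup.of (Sum.inr y1))) hXYv
    simp only [MulAut.mul_apply] at heval
    have hτ1 : τ (FreeGroup.of (Sum.inr y1)) = (FreeGroup.of (Sum.inr y1 : A ⊕ B))⁻¹ := by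
      rw [hτdef, invAut_apply, invHom_inr, if_pos rfl]
    have hσ1 : σ (FreeGroup.of (Sum.inr y1)) = FreeGroup.of (Sum.inr y2) := by
      simp [hσdef]
    have hσ1' : σ ((FreeGroup.of (Sum.inr y1 : A ⊕ B))⁻¹) =
        (FreeGroup.of (Sum.inr y2 : A ⊕ B))⁻¹ := by
      rw [_root_.map_inv, hσ1]
    have hτ2 : τ (FreeGroup.of (Sum.inr y2)) = FreeGroup.of (Sum.inr y2) := by
      rw [hτdef, invAut_apply, invHom_inr, if_neg (Ne.symm hy12)]
    rw [hτ1, hσ1', hσ1, hτ2] at heval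
    -- (of (inr y2))⁻¹ = of (inr y2) is absurd
    have habs := congrArg (expS (Sum.inr y2 : A ⊕ B)) heval
    rw [_root_.map_inv, expS_of] at habs
    have := congrArg Multiplicative.toAdd habs
    simp at this
  · -- CASE 2 : w ∉ ⟨A⟩
    have hb1 : b ≠ 1 := by
      intro hb0
      apply hwA
      have hle : Subgroup.closure
          ((Set.range fun a : A => FreeGroup.of (Sum.inl a)) ∪ {b}) ≤
          Subgroup.closure (Set.range fun a : A => FreeGroup.of (Sum.inl a)) := by
        apply Subgroup.closure_le _ |>.2
        rintro x (hx | hx)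
        · exact Subgroup.subset_closure hx
        · rw [Set.mem_singleton_iff] at hx
          rw [hx, hb0]
          exact Subgroup.one_mem _
      exact hle hw
    set θ : MulAut (FreeGroup (A ⊕ B)) := thAut b hb with hθdef
    have hθb : θ b = b := by
      have h := conj_on_SB (pConj b) b (fun y => pConj_inr b y) b hb
      show pConj b b = b
      rw [h]; group
    have hθfix : ∀ x ∈ Subgroup.closure
        ((Set.range fun a : A => FreeGroup.of (Sum.inl a)) ∪ {b}), θ x = x := by
      intro x hx
      induction hx using Subgroup.closure_induction with
      | mem u hu =>
        rcases hu with ⟨a, rfl⟩ | hu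
        · exact pConj_inl b a
        · rw [Set.mem_singleton_iff] at hu; rw [hu]; exact hθb
      | one => exact _root_.map_one θ
      | mul u v hu hv h1 h2 => rw [_root_.map_mul, h1, h2]
      | inv u hu h1 => rw [_root_.map_inv, h1]
    have hθmem : θ ∈ MulAction.stabilizer (MulAut (FreeGroup (A ⊕ B))) w := by
      rw [MulAction.mem_stabilizer_iff, MulAut.smul_def]; exact hθfix w hw
    have hιmem : MulAut.conj w ∈ MulAction.stabilizer (MulAut (FreeGroup (A ⊕ B))) w := by
      rw [MulAction.mem_stabilizer_iff, MulAut.smul_def, MulAut.conj_apply]; group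
    set X : MulAction.stabilizer (MulAut (FreeGroup (A ⊕ B))) w := ⟨θ, hθmem⟩
    set Y : MulAction.stabilizer (MulAut (FreeGroup (A ⊕ B))) w := ⟨MulAut.conj w, hιmem⟩
    obtain ⟨k, hk⟩ := Subgroup.mem_zpowers_iff.1 (hg X)
    obtain ⟨l, hl⟩ := Subgroup.mem_zpowers_iff.1 (hg Y)
    -- rhoB w is a power of b
    have hρfix : ∀ x ∈ Subgroup.closure
        ((Set.range fun a : A => FreeGroup.of (Sum.inl a)) ∪ {b}),
        rhoB x ∈ Subgroup.zpowers b := by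
      intro x hx
      induction hx using Subgroup.closure_induction with
      | mem u hu =>
        rcases hu with ⟨a, rfl⟩ | hu
        · rw [rhoB_inl]; exact Subgroup.one_mem _
        · rw [Set.mem_singleton_iff] at hu; rw [hu, rhoB_fix hb]
          exact Subgroup.mem_zpowers b
      | one => rw [_root_.map_one]; exact Subgroup.one_mem _
      | mul u v hu hv h1 h2 => rw [_root_.map_mul]; exact Subgroup.mul_mem _ h1 h2
      | inv u hu h1 => rw [_root_.map_inv]; exact Subgroup.inv_mem _ h1
    have hρw : rhoB w ∈ Subgroup.zpowers b := hρfix w hw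
    obtain ⟨m, hm⟩ := Subgroup.mem_zpowers_iff.1 hρw
    -- X ^ l = Y ^ k, pushed into MulAut
    have hXY : X ^ l = Y ^ k := by rw [← hk, ← hl, ← zpow_mul, ← zpow_mul, mul_comm]
    have hXYv : (θ : MulAut (FreeGroup (A ⊕ B))) ^ l = MulAut.conj (w ^ k) := by
      have h1 := congrArg Subtype.val hXY
      rw [SubgroupClass.coe_zpow, SubgroupClass.coe_zpow] at h1
      rw [h1, ← map_zpow]
    -- evaluate at B-generators and retract
    have hEq2 : ∀ y : B, b ^ l * FreeGroup.of (Sum.inr y) * b ^ (-l)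
        = w ^ k * FreeGroup.of (Sum.inr y) * (w ^ k)⁻¹ := by
      intro y
      have he := congrArg (fun (e : MulAut (FreeGroup (A ⊕ B))) =>
        e (FreeGroup.of (Sum.inr y))) hXYv
      rw [(thAut_zpow_spec b hb l).2 (FreeGroup.of (Sum.inr y))
        (Subgroup.subset_closure ⟨y, rfl⟩)] at he
      rw [MulAut.conj_apply] at he
      exact he
    have hEq2' : ∀ y : B, b ^ l * FreeGroup.of (Sum.inr y) * (b ^ l)⁻¹
        = b ^ (m * k) * FreeGroup.of (Sum.inr y) * (b ^ (m * k))⁻¹ := by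
      intro y
      have he := congrArg rhoB (hEq2 y)
      rw [_root_.map_mul, _root_.map_mul, _root_.map_mul, _root_.map_mul] at he
      rw [rhoB_fix (Subgroup.zpow_mem _ hb l), rhoB_fix (Subgroup.zpow_mem _ hb (-l)),
        rhoB_inr] at he
      rw [_root_.map_inv, map_zpow, ← hm, ← zpow_mul] at he
      rw [← he, zpow_neg]
    -- hence b ^ (l - m*k) commutes with all B-generators, so it is 1, so l = m*k
    have hcomm1 : ∀ y : B, (b ^ (m * k))⁻¹ * b ^ l * FreeGroup.of (Sum.inr y)
        = FreeGroup.of (Sum.inr y) * ((b ^ (m * k))⁻¹ * b ^ l) := fun y => conj_conj_comm (hEq2' y)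
    have hbml : (b ^ (m * k))⁻¹ * b ^ l = b ^ (l - m * k) := by
      rw [← zpow_neg, ← zpow_add]
      congr 1
      ring
    have hlmk : l - m * k = 0 := by
      apply freeGroup_tf hb1
      apply comm_two_eq_one _ (show (Sum.inr y1 : A ⊕ B) ≠ Sum.inr y2 by simp [hy12])
      · rw [← hbml]; exact hcomm1 y1
      · rw [← hbml]; exact hcomm1 y2
    -- therefore conj w = θ ^ m
    have hYX : Y = X ^ m := by
      rw [← hk, ← hl, ← zpow_mul]
      congr 1
      rw [mul_comm]
      omega
    have hYXv : MulAut.conj w = (θ : MulAut (FreeGroup (A ⊕ B))) ^ m := by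
      have h1 := congrArg Subtype.val hYX
      rwa [SubgroupClass.coe_zpow] at h1
    -- evaluate at B-generators : w = b ^ m
    have hEq3 : ∀ y : B, w * FreeGroup.of (Sum.inr y) * w⁻¹
        = b ^ m * FreeGroup.of (Sum.inr y) * (b ^ m)⁻¹ := by
      intro y
      have he := congrArg (fun (e : MulAut (FreeGroup (A ⊕ B))) =>
        e (FreeGroup.of (Sum.inr y))) hYXv
      rw [MulAut.conj_apply, (thAut_zpow_spec b hb m).2 (FreeGroup.of (Sum.inr y))
        (Subgroup.subset_closure ⟨y, rfl⟩), zpow_neg] at he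
      exact he
    have hwbm : w = b ^ m := by
      have h0 : (b ^ m)⁻¹ * w = 1 := by
        apply comm_two_eq_one _ (show (Sum.inr y1 : A ⊕ B) ≠ Sum.inr y2 by simp [hy12])
        · exact conj_conj_comm (hEq3 y1)
        · exact conj_conj_comm (hEq3 y2)
      rw [inv_mul_eq_one] at h0
      exact h0.symm
    -- evaluate at an A-generator : w commutes with it
    have hEq4 : w * FreeGroup.of (Sum.inl a0) = FreeGroup.of (Sum.inl a0) * w := by
      have he := congrArg (fun (e : MulAut (FreeGroup (A ⊕ B))) =>
        e (FreeGroup.of (Sum.inl a0))) hYXv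
      rw [MulAut.conj_apply, (thAut_zpow_spec b hb m).1 a0] at he
      calc w * FreeGroup.of (Sum.inl a0) = (w * FreeGroup.of (Sum.inl a0) * w⁻¹) * w := by group
      _ = FreeGroup.of (Sum.inl a0) * w := by rw [he]
    obtain ⟨p, hp⟩ := Subgroup.mem_zpowers_iff.1 (comm_mem_zpowers w (Sum.inl a0) hEq4)
    have hρw1 : rhoB w = 1 := by
      rw [← hp, map_zpow, rhoB_inl, one_zpow]
    have hρw2 : rhoB w = w := by
      rw [hwbm, map_zpow, rhoB_fix hb]
    have hw1 : w = 1 := by rw [← hρw2, hρw1]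
    apply hwA
    rw [hw1]
    exact Subgroup.one_mem _
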